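/- Let $\mathfrak{J}$ be a non-trivial, monotone, uniformly vanishing, locally non-vanishing set function on dyadic cubes. For $\alpha > 0$ and $n \in \mathbb{N}$, $N_\alpha(n) := \operatorname{card}\{Q \in \mathcal{S}_n : \mathfrak{J}(Q) \ge 2^{-\alpha n}\} \le \operatorname{card}(G_{2^{\alpha n}}) = M(2^{\alpha n})$. Consequently the upper optimised coarse multifractal dimension $\overline{F} = \sup_{\alpha>0}\limsup_n \frac{\log^+ N_\alpha(n)}{\alpha n \log 2}$ satisfies $\overline{F} \le \overline{h} := \limsup_{x\to\infty}\frac{\log M(x)}{\log x}$, and similarly $\underline{F} \le \underline{h}$ for the corresponding liminf quantities. -/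

import Mathlib

open Filter Set

noncomputable section

/-- Validity of a dyadic-cube index of generation `p.1`. -/
def validQ (d : ℕ) (p : ℕ × (Fin d → ℕ)) : Prop := ∀ i, p.2 i < 2 ^ p.1

/-- The dyadic parent of a cube index. -/
def parQ (d : ℕ) (p : ℕ × (Fin d → ℕ)) : ℕ × (Fin d → ℕ) := (p.1 - 1, fun i => p.2 i / 2)

/-- The minimal `x`-good partition `G_x`. -/
def goodPart (d : ℕ) (J : ℕ × (Fin d → ℕ) → ℝ) (x : ℝ) : Set (ℕ × (Fin d → ℕ)) :=
  {p | validQ d p ∧ 0 < p.1 ∧ J p < 1 / x ∧ 1 / x ≤ J (parQ d p)}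

/-- `M(x) = card G_x`. -/
def Mfn (d : ℕ) (J : ℕ × (Fin d → ℕ) → ℝ) (x : ℝ) : ℕ := (goodPart d J x).ncard

/-- `N_α(n) = card {Q ∈ 𝒮_n : 𝔍(Q) ≥ 2^{-αn}}`. -/
def Ncnt (d : ℕ) (J : ℕ × (Fin d → ℕ) → ℝ) (α : ℝ) (n : ℕ) : ℕ :=
  {p : ℕ × (Fin d → ℕ) | p.1 = n ∧ validQ d p ∧ (2 : ℝ) ^ (-(α * n)) ≤ J p}.ncard

lemma valid_child (d : ℕ) (p : ℕ × (Fin d → ℕ)) (hp : validQ d p) (j : Fin d → Fin 2) :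
    validQ d (p.1 + 1, fun i => 2 * p.2 i + (j i : ℕ)) := by
  intro i
  have h1 := hp i
  have h2 := (j i).2
  simp only [pow_succ]
  omega

lemma par_child (d : ℕ) (p : ℕ × (Fin d → ℕ)) (j : Fin d → Fin 2) :
    parQ d (p.1 + 1, fun i => 2 * p.2 i + (j i : ℕ)) = p := by
  unfold parQ
  refine Prod.ext (by simp) ?_
  funext i
  have h2 := (j i).2
  simp only
  omega

lemma descend (d : ℕ) (J : ℕ × (Fin d → ℕ) → ℝ) (x : ℝ) (hx : 0 < x)
    (hlnv : ∀ p, validQ d p → 0 < J p →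
      ∃ j : Fin d → Fin 2, 0 < J (p.1 + 1, fun i => 2 * p.2 i + (j i : ℕ)))
    (N : ℕ) (hN : ∀ p, validQ d p → N ≤ p.1 → J p < 1 / x) :
    ∀ t p, validQ d p → 1 / x ≤ J p → N ≤ p.1 + t →
      ∃ q ∈ goodPart d J x, ∃ m, 0 < m ∧ q.1 = p.1 + m ∧ (parQ d)^[m] q = p := by
  intro t
  induction t with
  | zero =>
    intro p hv hJ hle
    exact absurd (hN p hv (by omega)) (not_lt.2 hJ)
  | succ t ih =>
    intro p hv hJ hle
    have hJpos : 0 < J p := lt_of_lt_of_le (by positivity) hJ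
    obtain ⟨j, hj⟩ := hlnv p hv hJpos
    set c : ℕ × (Fin d → ℕ) := (p.1 + 1, fun i => 2 * p.2 i + (j i : ℕ)) with hc
    have hvc : validQ d c := valid_child d p hv j
    have hpc : parQ d c = p := par_child d p j
    by_cases h : J c < 1 / x
    · exact ⟨c, ⟨hvc, by simp [hc], h, by rw [hpc]; exact hJ⟩, 1, one_pos, by simp [hc],
        by simp [hpc]⟩
    · obtain ⟨q, hq, m, hm, hq1, hqi⟩ := ih c hvc (not_lt.1 h) (by simp only [hc]; omega)
      refine ⟨q, hq, m + 1, by omega, by simp only [hc] at hq1; omega, ?_⟩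
      rw [Function.iterate_succ_apply', hqi, hpc]

lemma finite_bdd (d N : ℕ) : {p : ℕ × (Fin d → ℕ) | p.1 ≤ N ∧ ∀ i, p.2 i < 2 ^ N}.Finite := by
  have hsub : {p : ℕ × (Fin d → ℕ) | p.1 ≤ N ∧ ∀ i, p.2 i < 2 ^ N} ⊆
      (Set.Iic N) ×ˢ (Set.pi Set.univ fun _ : Fin d => Set.Iio (2 ^ N)) := by
    intro p hp
    exact ⟨hp.1, fun i _ => hp.2 i⟩
  exact ((Set.finite_Iic N).prod (Set.Finite.pi fun _ => Set.finite_Iio _)).subset hsub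

lemma good_finite (d : ℕ) (J : ℕ × (Fin d → ℕ) → ℝ) (x : ℝ)
    (N : ℕ) (hN : ∀ p, validQ d p → N ≤ p.1 → J p < 1 / x) :
    (goodPart d J x).Finite := by
  apply (finite_bdd d N).subset
  rintro ⟨n, k⟩ ⟨hv, hn, hlt, hge⟩
  have hpar_valid : validQ d (parQ d (n, k)) := by
    intro i
    simp only [parQ]
    rw [Nat.div_lt_iff_lt_mul two_pos]
    calc k i < 2 ^ n := hv i
      _ ≤ 2 ^ (n - 1) * 2 := by rw [← pow_succ]; exact Nat.pow_le_pow_right (by norm_num) (by omega)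
  have hnN : n - 1 < N := by
    by_contra hcon
    exact absurd hge (not_le.2 (hN _ hpar_valid (by simp [parQ]; omega)))
  exact ⟨by omega, fun i => lt_of_lt_of_le (hv i) (Nat.pow_le_pow_right (by norm_num) (by omega))⟩

lemma key (d : ℕ) (J : ℕ × (Fin d → ℕ) → ℝ)
    (huv : ∀ ε > (0 : ℝ), ∃ N : ℕ, ∀ p, validQ d p → N ≤ p.1 → J p < ε)
    (hlnv : ∀ p, validQ d p → 0 < J p →
      ∃ j : Fin d → Fin 2, 0 < J (p.1 + 1, fun i => 2 * p.2 i + (j i : ℕ)))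
    (α : ℝ) (n : ℕ) (x : ℝ) (hx : (2 : ℝ) ^ (α * n) ≤ x) :
    Ncnt d J α n ≤ Mfn d J x := by
  classical
  have h2 : (0 : ℝ) < (2 : ℝ) ^ (α * n) := Real.rpow_pos_of_pos two_pos _
  have hx0 : 0 < x := lt_of_lt_of_le h2 hx
  have hxinv : 1 / x ≤ (2 : ℝ) ^ (-(α * n)) := by
    rw [Real.rpow_neg (by norm_num : (0:ℝ) ≤ 2), ← one_div]
    exact one_div_le_one_div_of_le h2 hx
  obtain ⟨N, hN⟩ := huv (1 / x) (by positivity)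
  have hGfin : (goodPart d J x).Finite := good_finite d J x N hN
  set S := {p : ℕ × (Fin d → ℕ) | p.1 = n ∧ validQ d p ∧ (2 : ℝ) ^ (-(α * (n : ℝ))) ≤ J p}
    with hS
  have hdes : ∀ p ∈ S, ∃ q, q ∈ goodPart d J x ∧
      ∃ m, 0 < m ∧ q.1 = p.1 + m ∧ (parQ d)^[m] q = p := by
    intro p hp
    obtain ⟨q, hq, hrest⟩ :=
      descend d J x hx0 hlnv N hN N p hp.2.1 (le_trans hxinv hp.2.2) (by omega)
    exact ⟨q, hq, hrest⟩
  choose f hf hfm using hdes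
  let g : ℕ × (Fin d → ℕ) → ℕ × (Fin d → ℕ) := fun p => if h : p ∈ S then f p h else p
  refine Set.ncard_le_ncard_of_injOn g (fun p hp => ?_) (fun p hp p' hp' hpp' => ?_) hGfin
  · simp only [g, dif_pos (show p ∈ S from hp)]
    exact hf p hp
  · simp only [g, dif_pos (show p ∈ S from hp), dif_pos (show p' ∈ S from hp')] at hpp'
    obtain ⟨m, hm0, hm1, hm2⟩ := hfm p hp
    obtain ⟨m', hm0', hm1', hm2'⟩ := hfm p' hp'
    have hmm : m = m' := by
      rw [hpp'] at hm1
      rw [hp.1] at hm1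
      rw [hp'.1] at hm1'
      omega
    rw [← hm2, ← hm2', hpp', hmm]

lemma log_nat_mono {a b : ℕ} (h : a ≤ b) : Real.log a ≤ Real.log b := by
  rcases Nat.eq_zero_or_pos a with h0 | h0
  · rw [h0]; simpa using Real.log_natCast_nonneg b
  · exact Real.log_le_log (by exact_mod_cast h0) (by exact_mod_cast h)

lemma tendsto_two_rpow (α : ℝ) (hα : 0 < α) :
    Tendsto (fun n : ℕ => (2:ℝ) ^ (α * n)) atTop atTop := by
  have h1 : Tendsto (fun n : ℕ => Real.log 2 * (α * n)) atTop atTop :=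
    Tendsto.const_mul_atTop (Real.log_pos one_lt_two)
      (Tendsto.const_mul_atTop hα tendsto_natCast_atTop_atTop)
  have h2 := Real.tendsto_exp_atTop.comp h1
  refine h2.congr fun n => ?_
  simp only [Function.comp_apply]
  rw [Real.rpow_def_of_pos two_pos]

lemma limsup_part (d : ℕ) (J : ℕ × (Fin d → ℕ) → ℝ)
    (huv : ∀ ε > (0 : ℝ), ∃ N : ℕ, ∀ p, validQ d p → N ≤ p.1 → J p < ε)
    (hlnv : ∀ p, validQ d p → 0 < J p →
      ∃ j : Fin d → Fin 2, 0 < J (p.1 + 1, fun i => 2 * p.2 i + (j i : ℕ)))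
    (α : ℝ) (hα : 0 < α) :
    limsup (fun n : ℕ =>
        ((Real.log (Ncnt d J α n) / (α * n * Real.log 2) : ℝ) : EReal)) atTop ≤
      limsup (fun x : ℝ => ((Real.log (Mfn d J x) / Real.log x : ℝ) : EReal)) atTop := by
  by_contra hcon
  push_neg at hcon
  obtain ⟨c, hc1, hc2⟩ := EReal.exists_between_coe_real hcon
  have hfreq : ∃ᶠ n : ℕ in atTop, (c : EReal) <
      ((Real.log (Ncnt d J α n) / (α * n * Real.log 2) : ℝ) : EReal) :=
    frequently_lt_of_lt_limsup (by isBoundedDefault) hc2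
  have hev : ∀ᶠ x : ℝ in atTop,
      ((Real.log (Mfn d J x) / Real.log x : ℝ) : EReal) < c :=
    eventually_lt_of_limsup_lt hc1 (by isBoundedDefault)
  have hevn : ∀ᶠ n : ℕ in atTop,
      ((Real.log (Mfn d J ((2:ℝ) ^ (α * n))) / Real.log ((2:ℝ) ^ (α * n)) : ℝ) : EReal) < c :=
    (tendsto_two_rpow α hα).eventually hev
  obtain ⟨n, hcF, hG, hn1⟩ := (hfreq.and_eventually (hevn.and (eventually_ge_atTop 1))).exists
  have hn0 : (0:ℝ) < (n:ℝ) := by exact_mod_cast hn1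
  have hden : (0:ℝ) < α * n * Real.log 2 := mul_pos (mul_pos hα hn0) (Real.log_pos one_lt_two)
  have hMN : Ncnt d J α n ≤ Mfn d J ((2:ℝ) ^ (α * n)) := key d J huv hlnv α n _ le_rfl
  have hle : Real.log (Ncnt d J α n) / (α * n * Real.log 2) ≤
      Real.log (Mfn d J ((2:ℝ) ^ (α * n))) / Real.log ((2:ℝ) ^ (α * n)) := by
    rw [Real.log_rpow two_pos]
    exact div_le_div_of_nonneg_right (log_nat_mono hMN) hden.le
  have := lt_of_lt_of_le hcF (EReal.coe_le_coe_iff.2 hle)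
  exact absurd (this.trans hG) (lt_irrefl _)

lemma liminf_part (d : ℕ) (J : ℕ × (Fin d → ℕ) → ℝ)
    (huv : ∀ ε > (0 : ℝ), ∃ N : ℕ, ∀ p, validQ d p → N ≤ p.1 → J p < ε)
    (hlnv : ∀ p, validQ d p → 0 < J p →
      ∃ j : Fin d → Fin 2, 0 < J (p.1 + 1, fun i => 2 * p.2 i + (j i : ℕ)))
    (α : ℝ) (hα : 0 < α) :
    liminf (fun n : ℕ =>
        ((Real.log (Ncnt d J α n) / (α * n * Real.log 2) : ℝ) : EReal)) atTop ≤
      liminf (fun x : ℝ => ((Real.log (Mfn d J x) / Real.log x : ℝ) : EReal)) atTop := by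
  by_contra hcon
  push_neg at hcon
  obtain ⟨c, hc1, hc2⟩ := EReal.exists_between_coe_real hcon
  obtain ⟨c'', hc''1, hc''2⟩ := EReal.exists_between_coe_real hc1
  have hcc : c'' < c := by exact_mod_cast hc''2
  have hevF : ∀ᶠ n : ℕ in atTop, (c : EReal) <
      ((Real.log (Ncnt d J α n) / (α * n * Real.log 2) : ℝ) : EReal) :=
    eventually_lt_of_lt_liminf hc2 (by isBoundedDefault)
  have hfreqG : ∃ᶠ x : ℝ in atTop,
      ((Real.log (Mfn d J x) / Real.log x : ℝ) : EReal) < (c'' : EReal) :=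
    frequently_lt_of_liminf_lt (by isBoundedDefault) hc''1
  have htend : Tendsto (fun n : ℕ => c * ((n:ℝ)/((n:ℝ)+1))) atTop (nhds c) := by
    have := tendsto_natCast_div_add_atTop (1:ℝ)
    simpa using tendsto_const_nhds.mul this
  have hev2 : ∀ᶠ n : ℕ in atTop, c'' < c * ((n:ℝ)/((n:ℝ)+1)) :=
    htend.eventually (eventually_gt_nhds hcc)
  obtain ⟨N0, hN0⟩ := ((hevF.and hev2).and (eventually_ge_atTop 1)).exists_forall_of_atTop
  have hN0pos : 1 ≤ N0 := (hN0 N0 le_rfl).2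
  have hαl : (0:ℝ) < α * Real.log 2 := mul_pos hα (Real.log_pos one_lt_two)
  have hαN0 : (0:ℝ) < α * N0 := mul_pos hα (by exact_mod_cast hN0pos)
  have hkey : ∀ x : ℝ, (2:ℝ) ^ (α * N0) ≤ x →
      ¬ (((Real.log (Mfn d J x) / Real.log x : ℝ) : EReal) < (c'' : EReal)) := by
    intro x hxge
    have hx1 : 1 < x :=
      lt_of_lt_of_le ((Real.one_lt_rpow_iff_of_pos two_pos).2 (Or.inl ⟨one_lt_two, hαN0⟩)) hxge
    have hlogx : 0 < Real.log x := Real.log_pos hx1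
    set n : ℕ := ⌊Real.log x / (α * Real.log 2)⌋₊ with hn
    have ht1 : (N0:ℝ) ≤ Real.log x / (α * Real.log 2) := by
      rw [le_div_iff₀ hαl]
      have h1 : Real.log ((2:ℝ) ^ (α * N0)) ≤ Real.log x :=
        Real.log_le_log (Real.rpow_pos_of_pos two_pos _) hxge
      rw [Real.log_rpow two_pos] at h1
      have e : α * (N0:ℝ) * Real.log 2 = (N0:ℝ) * (α * Real.log 2) := by ring
      rw [← e]; exact h1
    have hn0 : N0 ≤ n := Nat.le_floor ht1
    have hn1 : 1 ≤ n := le_trans hN0pos hn0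
    have hnR : (0:ℝ) < (n:ℝ) := by exact_mod_cast hn1
    have hfl : (n:ℝ) ≤ Real.log x / (α * Real.log 2) := Nat.floor_le (by positivity)
    have hfu : Real.log x / (α * Real.log 2) < (n:ℝ) + 1 := Nat.lt_floor_add_one _
    have hxn : (2:ℝ) ^ (α * n) ≤ x := by
      rw [Real.rpow_def_of_pos two_pos]
      have h1 : (n:ℝ) * (α * Real.log 2) ≤ Real.log x := (le_div_iff₀ hαl).1 hfl
      have h2 : Real.log 2 * (α * (n:ℝ)) ≤ Real.log x := by
        have e : Real.log 2 * (α * (n:ℝ)) = (n:ℝ) * (α * Real.log 2) := by ring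
        rw [e]; exact h1
      have h3 := Real.exp_le_exp.2 h2
      rwa [Real.exp_log (by linarith : (0:ℝ) < x)] at h3
    have hlogxu : Real.log x < α * ((n:ℝ) + 1) * Real.log 2 := by
      have h1 : Real.log x < ((n:ℝ) + 1) * (α * Real.log 2) := (div_lt_iff₀ hαl).1 hfu
      have e : α * ((n:ℝ) + 1) * Real.log 2 = ((n:ℝ) + 1) * (α * Real.log 2) := by ring
      rw [e]; exact h1
    have hMN : Ncnt d J α n ≤ Mfn d J x := key d J huv hlnv α n x hxn
    set a : ℝ := Real.log (Ncnt d J α n) with ha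
    have ha0 : 0 ≤ a := Real.log_natCast_nonneg _
    obtain ⟨⟨hcF, hc''c⟩, -⟩ := hN0 n hn0
    have hcF' : c < a / (α * n * Real.log 2) := by exact_mod_cast hcF
    have heq : a / (α * n * Real.log 2) * ((n:ℝ)/((n:ℝ)+1)) =
        a / (α * ((n:ℝ) + 1) * Real.log 2) := by
      have hne : (n:ℝ) ≠ 0 := ne_of_gt hnR
      have hne1 : (n:ℝ) + 1 ≠ 0 := by positivity
      have hlne : Real.log 2 ≠ 0 := ne_of_gt (Real.log_pos one_lt_two)
      field_simp
    have hstep1 : c * ((n:ℝ)/((n:ℝ)+1)) < a / (α * ((n:ℝ) + 1) * Real.log 2) := by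
      rw [← heq]
      exact mul_lt_mul_of_pos_right hcF' (by positivity)
    have hstep2 : a / (α * ((n:ℝ) + 1) * Real.log 2) ≤ a / Real.log x := by
      apply div_le_div_of_nonneg_left ha0 hlogx (le_of_lt hlogxu)
    have hstep3 : a / Real.log x ≤ Real.log (Mfn d J x) / Real.log x :=
      div_le_div_of_nonneg_right (log_nat_mono hMN) hlogx.le
    intro hcontra
    have hcontra' : Real.log (Mfn d J x) / Real.log x < c'' := by exact_mod_cast hcontra
    linarith
  obtain ⟨x, hGx, hxge⟩ := (hfreqG.and_eventually (eventually_ge_atTop ((2:ℝ) ^ (α * N0)))).exists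
  exact hkey x hxge hGx

/-- For a non-trivial, monotone, uniformly vanishing, locally non-vanishing set
function `𝔍` on dyadic cubes: `N_α(n) ≤ M(2^{αn})` for all `α > 0`, `n`; consequently
`F̄ = sup_{α>0} limsup_n log⁺ N_α(n)/(α n log 2) ≤ h̄ = limsup_x log M(x)/log x`, and similarly
`F̲ ≤ h̲` for the corresponding liminf quantities. -/
theorem stmt10 (d : ℕ) (hd : 0 < d) (J : ℕ × (Fin d → ℕ) → ℝ)
    (hJ0 : ∀ p, 0 ≤ J p)
    (hnt : ∃ p, validQ d p ∧ 0 < J p)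
    (hmono : ∀ p, validQ d p → 0 < p.1 → J p ≤ J (parQ d p))
    (huv : ∀ ε > (0 : ℝ), ∃ N : ℕ, ∀ p, validQ d p → N ≤ p.1 → J p < ε)
    (hlnv : ∀ p, validQ d p → 0 < J p →
      ∃ j : Fin d → Fin 2, 0 < J (p.1 + 1, fun i => 2 * p.2 i + (j i : ℕ))) :
    (∀ α : ℝ, 0 < α → ∀ n : ℕ, Ncnt d J α n ≤ Mfn d J ((2 : ℝ) ^ (α * n))) ∧
    (⨆ (α : ℝ) (_ : 0 < α), limsup (fun n : ℕ =>
        ((max 0 (Real.log (Ncnt d J α n)) / (α * n * Real.log 2) : ℝ) : EReal)) atTop) ≤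
      limsup (fun x : ℝ => ((Real.log (Mfn d J x) / Real.log x : ℝ) : EReal)) atTop ∧
    (⨆ (α : ℝ) (_ : 0 < α), liminf (fun n : ℕ =>
        ((max 0 (Real.log (Ncnt d J α n)) / (α * n * Real.log 2) : ℝ) : EReal)) atTop) ≤
      liminf (fun x : ℝ => ((Real.log (Mfn d J x) / Real.log x : ℝ) : EReal)) atTop := by
  have hmax : ∀ m : ℕ, max 0 (Real.log m) = Real.log m := fun m =>
    max_eq_right (Real.log_natCast_nonneg m)
  refine ⟨fun α hα n => key d J huv hlnv α n _ le_rfl, ?_, ?_⟩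
  · refine iSup₂_le fun α hα => ?_
    simp only [hmax]
    exact limsup_part d J huv hlnv α hα
  · refine iSup₂_le fun α hα => ?_
    simp only [hmax]
    exact liminf_part d J huv hlnv α hα

end
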